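/- Let f ∈ C¹(ℝ) with f(t)=0 for t≤0, t f'(t) > f(t) for t>0, and let a₁>0 satisfy f'(a₁) ≤ V₀/2 where V₀ > 0. Define f̃(t) = f(t) for t ≤ a₁ and f̃(t) = f'(a₁)t + f(a₁) − f'(a₁)a₁ for t > a₁, and F̃(t) = ∫₀ᵗ f̃(s) ds. Then for every t > 0: 0 < 2F̃(t) < f̃(t)·t ≤ (V₀/2)·t². -/

import Mathlib

open Set Filter intervalIntegral

theorem stmt2 (f : ℝ → ℝ) (hf : ContDiff ℝ 1 f)
    (h0 : ∀ t ≤ (0:ℝ), f t = 0)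
    (hsup : ∀ t > (0:ℝ), t * deriv f t > f t)
    (V₀ : ℝ) (hV₀ : 0 < V₀)
    (a₁ : ℝ) (ha : 0 < a₁)
    (hV : deriv f a₁ ≤ V₀ / 2)
    (hslope : ∀ t ≥ a₁, deriv f t ≥ deriv f a₁)
    (ftilde : ℝ → ℝ)
    (hdef : ∀ t, ftilde t =
      if t ≤ a₁ then f t else deriv f a₁ * t + f a₁ - deriv f a₁ * a₁) :
    ∀ t > (0:ℝ),
      0 < 2 * (∫ s in (0:ℝ)..t, ftilde s) ∧
      2 * (∫ s in (0:ℝ)..t, ftilde s) < ftilde t * t ∧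
      ftilde t * t ≤ V₀ / 2 * t ^ 2 := by
  have hfc : Continuous f := hf.continuous
  have hfd : Differentiable ℝ f := hf.differentiable one_ne_zero
  have hf00 : f 0 = 0 := h0 0 le_rfl
  -- deriv f 0 = 0
  have hd0 : deriv f 0 = 0 := by
    have h1 : Tendsto (slope f 0) (nhdsWithin 0 (Iio 0)) (nhds (deriv f 0)) :=
      (hasDerivAt_iff_tendsto_slope.mp (hfd 0).hasDerivAt).mono_left
        (nhdsWithin_mono _ (fun x hx => ne_of_lt hx))
    have h2 : Tendsto (slope f 0) (nhdsWithin 0 (Iio 0)) (nhds 0) := by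
      apply Tendsto.congr' _ tendsto_const_nhds
      filter_upwards [self_mem_nhdsWithin] with x hx
      simp [slope, h0 x (le_of_lt hx), hf00]
    exact tendsto_nhds_unique h1 h2
  -- strict monotonicity of f s / s on (0,∞)
  have hratio : StrictMonoOn (fun s => f s / s) (Ioi (0:ℝ)) := by
    apply strictMonoOn_of_deriv_pos (convex_Ioi 0)
    · exact hfc.continuousOn.div continuousOn_id (fun x hx => ne_of_gt hx)
    · intro x hx
      rw [interior_Ioi] at hx
      have hx0 : (x:ℝ) ≠ 0 := ne_of_gt hx
      have hder : deriv (fun s => f s / s) x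
          = (deriv f x * x - f x * deriv (fun s : ℝ => s) x) / x ^ 2 :=
        deriv_div (hfd x) differentiableAt_fun_id hx0
      have hid : deriv (fun s : ℝ => s) x = 1 := by simp
      rw [hid] at hder
      rw [hder]
      apply div_pos
      · nlinarith [hsup x hx]
      · positivity
  -- nonnegativity of f s / s via limit at 0+
  have hslope0 : Tendsto (fun u => f u / u) (nhdsWithin 0 (Ioi 0)) (nhds 0) := by
    have h1 : Tendsto (slope f 0) (nhdsWithin 0 (Ioi 0)) (nhds (deriv f 0)) :=
      (hasDerivAt_iff_tendsto_slope.mp (hfd 0).hasDerivAt).mono_left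
        (nhdsWithin_mono _ (fun x hx => ne_of_gt hx))
    rw [hd0] at h1
    refine h1.congr (fun x => ?_)
    simp [slope, hf00, div_eq_inv_mul]
  have hfnn : ∀ s > (0:ℝ), 0 ≤ f s / s := by
    intro s hs
    refine le_of_tendsto hslope0 ?_
    filter_upwards [Ioo_mem_nhdsGT_of_mem ⟨le_rfl, hs⟩] with u hu
    exact le_of_lt (hratio (mem_Ioi.mpr hu.1) (mem_Ioi.mpr hs) hu.2)
  have hfpos : ∀ s > (0:ℝ), 0 < f s := by
    intro s hs
    have h1 := hratio (mem_Ioi.mpr (by linarith : (0:ℝ) < s/2)) (mem_Ioi.mpr hs)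
      (by linarith)
    have h2 := hfnn (s/2) (by linarith)
    have h3 : 0 < f s / s := lt_of_le_of_lt h2 h1
    have h4 := mul_pos h3 hs
    rwa [div_mul_cancel₀ _ (ne_of_gt hs)] at h4
  have hfa : 0 < f a₁ := hfpos a₁ ha
  have hkey : f a₁ < deriv f a₁ * a₁ := by have := hsup a₁ ha; linarith [hsup a₁ ha, mul_comm a₁ (deriv f a₁)]
  have hda : 0 < deriv f a₁ := by nlinarith
  -- continuity of ftilde
  have hft : ftilde = fun t => if t ≤ a₁ then f t else deriv f a₁ * t + f a₁ - deriv f a₁ * a₁ :=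
    funext hdef
  have hcont : Continuous ftilde := by
    rw [hft]
    apply Continuous.if_le hfc (by continuity) continuous_id continuous_const
    intro x hx; simp only [id] at hx; subst hx; ring
  -- positivity of ftilde
  have hftpos : ∀ s > (0:ℝ), 0 < ftilde s := by
    intro s hs
    rw [hdef]
    split_ifs with h
    · exact hfpos s hs
    · push_neg at h; nlinarith
  -- strict ratio monotonicity for ftilde
  have hratio' : ∀ s t : ℝ, 0 < s → s < t → ftilde s / s < ftilde t / t := by
    intro s t hs hst
    have ht : 0 < t := hs.trans hst
    rw [hdef s, hdef t]
    by_cases h1 : t ≤ a₁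
    · rw [if_pos (hst.le.trans h1), if_pos h1]
      exact hratio (mem_Ioi.mpr hs) (mem_Ioi.mpr ht) hst
    · push_neg at h1
      rw [if_neg (not_le.mpr h1)]
      have haff : f a₁ / a₁ < (deriv f a₁ * t + f a₁ - deriv f a₁ * a₁) / t := by
        rw [div_lt_div_iff₀ ha ht]
        nlinarith
      by_cases h2 : s ≤ a₁
      · rw [if_pos h2]
        rcases eq_or_lt_of_le h2 with h2e | h2l
        · rw [h2e]; exact haff
        · exact (hratio (mem_Ioi.mpr hs) (mem_Ioi.mpr ha) h2l).trans haff
      · push_neg at h2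
        rw [if_neg (not_le.mpr h2)]
        rw [div_lt_div_iff₀ hs ht]
        nlinarith
  -- upper bound
  have hub : ∀ t > (0:ℝ), ftilde t ≤ deriv f a₁ * t := by
    intro t ht
    rw [hdef]
    split_ifs with h
    · rcases eq_or_lt_of_le h with he | hl
      · rw [he]; nlinarith
      · have h1 := hratio (mem_Ioi.mpr ht) (mem_Ioi.mpr ha) hl
        have h2 : f a₁ / a₁ < deriv f a₁ := (div_lt_iff₀ ha).mpr (by nlinarith)
        have h3 : f t / t < deriv f a₁ := h1.trans h2
        have := (div_lt_iff₀ ht).mp h3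
        linarith
    · nlinarith
  intro t ht
  have hint : IntervalIntegrable ftilde MeasureTheory.volume 0 t :=
    hcont.intervalIntegrable 0 t
  have hI1 : 0 < ∫ s in (0:ℝ)..t, ftilde s :=
    intervalIntegral.intervalIntegral_pos_of_pos_on hint
      (fun x hx => hftpos x hx.1) ht
  refine ⟨by linarith, ?_, ?_⟩
  · -- middle inequality
    set c := ftilde t / t with hc
    have hI2 : 0 < ∫ s in (0:ℝ)..t, (c * s - ftilde s) := by
      apply intervalIntegral.intervalIntegral_pos_of_pos_on
      · exact ((continuous_const.mul continuous_id).sub hcont).intervalIntegrable 0 t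
      · intro x hx
        have h1 := hratio' x t hx.1 hx.2
        have h2 : ftilde x < ftilde t / t * x := (div_lt_iff₀ hx.1).mp h1
        have h3 : c = ftilde t / t := hc
        nlinarith
      · exact ht
    have hI3 : (∫ s in (0:ℝ)..t, (c * s - ftilde s))
        = c * (t ^ 2 / 2) - ∫ s in (0:ℝ)..t, ftilde s := by
      rw [intervalIntegral.integral_sub (f := fun s : ℝ => c * s)
        ((continuous_const.mul continuous_id : Continuous fun s : ℝ => c * s).intervalIntegrable 0 t) hint,
        intervalIntegral.integral_const_mul, integral_id]
      ring
    rw [hI3] at hI2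
    have hct : c * t ^ 2 = ftilde t * t := by
      rw [hc]; field_simp
    nlinarith
  · have h1 := hub t ht
    have h2 : deriv f a₁ * t ≤ V₀ / 2 * t := by nlinarith
    nlinarith
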